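/- For λ ∈ ℂ with Re(λ) < 0 ≠ λ, the function β ↦ 2√ε(1-β²)|Re(λ)| / ((1+β²)|λ|² + 2β(Im(λ)² - Re(λ)²)) is strictly decreasing on the interval ((|Re(λ)| - |Im(λ)|)/(|Re(λ)| + |Im(λ)|), 1). -/

import Mathlib

theorem stmt6 (lam : ℂ) (hlam : lam ≠ 0) (hre : lam.re < 0) (ε : ℝ) (hε : 0 < ε) :
    StrictAntiOn (fun β : ℝ =>
        2 * Real.sqrt ε * (1 - β ^ 2) * |lam.re| /
          ((1 + β ^ 2) * ‖lam‖ ^ 2 + 2 * β * (lam.im ^ 2 - lam.re ^ 2)))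
      (Set.Ioo ((|lam.re| - |lam.im|) / (|lam.re| + |lam.im|)) 1) := by
  intro x hx y hy hxy
  obtain ⟨hx1, hx2⟩ := hx
  obtain ⟨hy1, hy2⟩ := hy
  set a := lam.re with ha_def
  set b := lam.im with hb_def
  have ha : a < 0 := hre
  have haabs : |a| = -a := abs_of_neg ha
  have hapos : (0:ℝ) < |a| := abs_pos.mpr (ne_of_lt ha)
  have hbnn : (0:ℝ) ≤ |b| := abs_nonneg b
  have hab : (0:ℝ) < |a| + |b| := by linarith
  have hx1' : |a| * (1 - x) < |b| * (1 + x) := by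
    have := (div_lt_iff₀ hab).mp hx1
    nlinarith
  have hy1' : |a| * (1 - y) < |b| * (1 + y) := by
    have := (div_lt_iff₀ hab).mp hy1
    nlinarith
  have hxm1 : -1 < x := by nlinarith [mul_pos hapos (by linarith : (0:ℝ) < 1 - x)]
  have hym1 : -1 < y := by nlinarith [mul_pos hapos (by linarith : (0:ℝ) < 1 - y)]
  have key : a ^ 2 * (1 - x) * (1 - y) < b ^ 2 * (1 + x) * (1 + y) := by
    have h := mul_lt_mul'' hx1' hy1'
      (mul_nonneg (le_of_lt hapos) (by linarith)) (mul_nonneg (le_of_lt hapos) (by linarith))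
    calc a ^ 2 * (1 - x) * (1 - y) = |a| * (1 - x) * (|a| * (1 - y)) := by
          rw [← sq_abs a]; ring
      _ < |b| * (1 + x) * (|b| * (1 + y)) := h
      _ = b ^ 2 * (1 + x) * (1 + y) := by rw [← sq_abs b]; ring
  have hA : ‖lam‖ ^ 2 = a ^ 2 + b ^ 2 := by
    rw [Complex.sq_norm, Complex.normSq_apply]; ring
  have ha2 : 0 < a ^ 2 := by nlinarith
  have gx : (0:ℝ) < (1 + x ^ 2) * ‖lam‖ ^ 2 + 2 * x * (b ^ 2 - a ^ 2) := by
    rw [hA]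
    nlinarith [mul_pos ha2 (pow_pos (by linarith : (0:ℝ) < 1 - x) 2), sq_nonneg (1 + x), sq_nonneg b]
  have gy : (0:ℝ) < (1 + y ^ 2) * ‖lam‖ ^ 2 + 2 * y * (b ^ 2 - a ^ 2) := by
    rw [hA]
    nlinarith [mul_pos ha2 (pow_pos (by linarith : (0:ℝ) < 1 - y) 2), sq_nonneg (1 + y), sq_nonneg b]
  simp only
  rw [div_lt_div_iff₀ gy gx]
  have hs : 0 < Real.sqrt ε := Real.sqrt_pos.mpr hε
  rw [hA, haabs]
  nlinarith [mul_pos (mul_pos hs (by linarith : (0:ℝ) < -a))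
    (mul_pos (sub_pos.mpr hxy) (sub_pos.mpr key))]
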